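/- Let f : ℝ^{n×p} → ℝ be differentiable, let β ∈ ℝ, and define h(Y) = f(𝒜(Y)) + (β/2)‖C(Y)‖². Let X ∈ 𝓜. Then the following are equivalent: (a) for every W ∈ 𝓕, the Fréchet derivative of h at X in direction W is zero; (b) for every Z ∈ 𝓕 with Xᵀφ(Z) + Zᵀφ(X) = 0, one has ⟨∇f(X), Z⟩ = 0 (Frobenius inner product). In other words, X is a first-order stationary point of the penalty function h (restricted to 𝓕) if and only if the Euclidean gradient of f at X is orthogonal to the tangent space of 𝓜 at X. -/

import Mathlib

open Matrix

attribute [local instance] Matrix.frobeniusNormedAddCommGroup Matrix.frobeniusNormedSpace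

/-- Frobenius inner product `⟨A, B⟩ = tr(AᵀB)`. -/
noncomputable def frobInner {n p : ℕ} (A B : Matrix (Fin n) (Fin p) ℝ) : ℝ :=
  (Aᵀ * B).trace

/-- The constraint map `C(X) = Xᵀ φ(X) − I_p`. -/
noncomputable def Cmap {n p : ℕ}
    (φ : Matrix (Fin n) (Fin p) ℝ →ₗ[ℝ] Matrix (Fin n) (Fin p) ℝ)
    (X : Matrix (Fin n) (Fin p) ℝ) : Matrix (Fin p) (Fin p) ℝ :=
  Xᵀ * φ X - 1

/-- The constraint dissolving operator `𝒜(X) = (3/2)X − (1/2)X φ(X)ᵀ X`. -/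
noncomputable def Amap {n p : ℕ}
    (φ : Matrix (Fin n) (Fin p) ℝ →ₗ[ℝ] Matrix (Fin n) (Fin p) ℝ)
    (X : Matrix (Fin n) (Fin p) ℝ) : Matrix (Fin n) (Fin p) ℝ :=
  (3/2 : ℝ) • X - (1/2 : ℝ) • (X * (φ X)ᵀ * X)

/-- `𝒢 = span{X₁ᵀ X₂ : X₁, X₂ ∈ 𝓕}`. -/
noncomputable def Gspan {n p : ℕ} (𝓕 : Submodule ℝ (Matrix (Fin n) (Fin p) ℝ)) :
    Submodule ℝ (Matrix (Fin p) (Fin p) ℝ) :=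
  Submodule.span ℝ {T | ∃ X₁ ∈ 𝓕, ∃ X₂ ∈ 𝓕, T = X₁ᵀ * X₂}

lemma isBBM_matmul (a b c : ℕ) :
    IsBoundedBilinearMap ℝ
      (fun q : Matrix (Fin a) (Fin b) ℝ × Matrix (Fin b) (Fin c) ℝ => q.1 * q.2) where
  add_left x₁ x₂ y := Matrix.add_mul x₁ x₂ y
  smul_left c x y := Matrix.smul_mul c x y
  add_right x y₁ y₂ := Matrix.mul_add x y₁ y₂
  smul_right c x y := Matrix.mul_smul x c y
  bound := ⟨1, one_pos, fun x y => by simpa using Matrix.frobenius_norm_mul x y⟩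

noncomputable def tCLM (a b : ℕ) : Matrix (Fin a) (Fin b) ℝ →L[ℝ] Matrix (Fin b) (Fin a) ℝ :=
  LinearMap.toContinuousLinearMap (Matrix.transposeLinearEquiv (Fin a) (Fin b) ℝ ℝ).toLinearMap

@[simp] lemma tCLM_apply (a b : ℕ) (M : Matrix (Fin a) (Fin b) ℝ) : tCLM a b M = Mᵀ := rfl

noncomputable def trCLM (a : ℕ) : Matrix (Fin a) (Fin a) ℝ →L[ℝ] ℝ :=
  LinearMap.toContinuousLinearMap (Matrix.traceLinearMap (Fin a) ℝ ℝ)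

@[simp] lemma trCLM_apply (a : ℕ) (M : Matrix (Fin a) (Fin a) ℝ) : trCLM a M = M.trace := rfl

lemma HasFDerivAt.matmul {E : Type*} [NormedAddCommGroup E] [NormedSpace ℝ E]
    {a b c : ℕ}
    {u : E → Matrix (Fin a) (Fin b) ℝ} {v : E → Matrix (Fin b) (Fin c) ℝ}
    {u' : E →L[ℝ] Matrix (Fin a) (Fin b) ℝ} {v' : E →L[ℝ] Matrix (Fin b) (Fin c) ℝ} {x : E}
    (hu : HasFDerivAt u u' x) (hv : HasFDerivAt v v' x) :
    HasFDerivAt (fun y => u y * v y)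
      (((isBBM_matmul a b c).deriv (u x, v x)).comp (u'.prod v')) x :=
  by have := ((isBBM_matmul a b c).hasFDerivAt (u x, v x)).comp x (HasFDerivAt.prodMk hu hv); exact this

lemma norm_sq_eq_trace {p : ℕ} (M : Matrix (Fin p) (Fin p) ℝ) :
    ‖M‖ ^ 2 = (Mᵀ * M).trace := by
  have h0 : (0:ℝ) ≤ ∑ i, ∑ j, ‖M i j‖ ^ (2:ℝ) := by positivity
  have h1 : ‖M‖ ^ 2 = ∑ i, ∑ j, ‖M i j‖ ^ (2:ℝ) := by
    rw [Matrix.frobenius_norm_def, ← Real.rpow_natCast _ 2, ← Real.rpow_mul h0]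
    norm_num
  have h2 : ∀ x : ℝ, ‖x‖ ^ (2:ℝ) = x * x := fun x => by
    rw [show (2:ℝ) = ((2:ℕ):ℝ) by norm_num, Real.rpow_natCast]
    simp [sq, Real.norm_eq_abs, abs_mul_abs_self, pow_two]
  rw [h1, Finset.sum_comm]
  simp [h2, Matrix.trace, Matrix.diag, Matrix.mul_apply, pow_two]

theorem stmt_18 {n p : ℕ} (hn : 0 < n) (hp : 0 < p)
    (φ : Matrix (Fin n) (Fin p) ℝ →ₗ[ℝ] Matrix (Fin n) (Fin p) ℝ)
    (𝓕 : Submodule ℝ (Matrix (Fin n) (Fin p) ℝ))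
    (ψ : Matrix (Fin p) (Fin p) ℝ →ₗ[ℝ] Matrix (Fin p) (Fin p) ℝ)
    (hφ𝓕 : ∀ X ∈ 𝓕, φ X ∈ 𝓕)
    (hXT : ∀ X ∈ 𝓕, ∀ T ∈ Gspan 𝓕, X * T ∈ 𝓕)
    (hφsa : ∀ A B : Matrix (Fin n) (Fin p) ℝ, frobInner (φ A) B = frobInner A (φ B))
    (hψG : ∀ T ∈ Gspan 𝓕, ψ T ∈ Gspan 𝓕)
    (hφψ : ∀ X ∈ 𝓕, ∀ T ∈ Gspan 𝓕, φ (X * T) = φ X * ψ T)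
    (hψφ : ∀ X ∈ 𝓕, ψ ((φ X)ᵀ * X) = Xᵀ * φ X)
    (f : Matrix (Fin n) (Fin p) ℝ → ℝ) (hf : Differentiable ℝ f)
    (β : ℝ)
    (X : Matrix (Fin n) (Fin p) ℝ) (hX : X ∈ 𝓕) (hX1 : Xᵀ * φ X = 1)
    (G : Matrix (Fin n) (Fin p) ℝ)
    (hG : ∀ Z : Matrix (Fin n) (Fin p) ℝ, fderiv ℝ f X Z = frobInner G Z) :
    (∀ W ∈ 𝓕, fderiv ℝ (fun Y => f (Amap φ Y) + (β / 2) * ‖Cmap φ Y‖ ^ 2) X W = 0) ↔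
    (∀ Z ∈ 𝓕, Xᵀ * φ Z + Zᵀ * φ X = 0 → frobInner G Z = 0) := by
  have hXT1 : (φ X)ᵀ * X = 1 := by
    have h := congrArg Matrix.transpose hX1
    simpa using h
  have hC0 : Cmap φ X = 0 := by simp [Cmap, hX1]
  have hAX : Amap φ X = X := by
    rw [Amap, Matrix.mul_assoc, hXT1, Matrix.mul_one, ← sub_smul]
    norm_num
  -- the key derivative formula
  have key : ∀ W, fderiv ℝ (fun Y => f (Amap φ Y) + (β / 2) * ‖Cmap φ Y‖ ^ 2) X W
      = frobInner G ((3/2:ℝ) • W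
          - (1/2:ℝ) • ((X * (φ W)ᵀ + W * (φ X)ᵀ) * X + X * (φ X)ᵀ * W)) := by
    set φc := LinearMap.toContinuousLinearMap φ with hφcdef
    have hφder : HasFDerivAt (fun Y : Matrix (Fin n) (Fin p) ℝ => φ Y) φc X := φc.hasFDerivAt
    have htd : ∀ (Y : Matrix (Fin n) (Fin p) ℝ),
        HasFDerivAt (fun M : Matrix (Fin n) (Fin p) ℝ => Mᵀ) (tCLM n p) Y :=
      fun Y => (tCLM n p).hasFDerivAt
    have hφT : HasFDerivAt (fun Y => (φ Y)ᵀ) ((tCLM n p).comp φc) X :=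
      ((tCLM n p).hasFDerivAt).comp X hφder
    have h1 := (hasFDerivAt_id X).matmul hφT
    have h2 := h1.matmul (hasFDerivAt_id X)
    have hA : HasFDerivAt (Amap φ) _ X := ((hasFDerivAt_id X).const_smul (3/2:ℝ)).sub
      (h2.const_smul (1/2:ℝ))
    have hfd : HasFDerivAt f (fderiv ℝ f X) (Amap φ X) := by
      rw [hAX]; exact (hf X).hasFDerivAt
    have hfA : HasFDerivAt (fun Y => f (Amap φ Y)) _ X := hfd.comp X hA
    have hC : HasFDerivAt (Cmap φ) _ X := ((htd X).matmul hφder).sub_const 1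
    have hCT : HasFDerivAt (fun Y => (Cmap φ Y)ᵀ) _ X := ((tCLM p p).hasFDerivAt).comp X hC
    have hq := hCT.matmul hC
    have htr : HasFDerivAt (fun Y => ((Cmap φ Y)ᵀ * Cmap φ Y).trace) _ X :=
      ((trCLM p).hasFDerivAt).comp X hq
    have hpen := htr.const_mul (β/2)
    have hfun : (fun Y => f (Amap φ Y) + (β / 2) * ‖Cmap φ Y‖ ^ 2)
        = fun Y => f (Amap φ Y) + (β / 2) * ((Cmap φ Y)ᵀ * Cmap φ Y).trace := by
      funext Y; rw [norm_sq_eq_trace]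
    have hh : HasFDerivAt (fun Y => f (Amap φ Y) + (β / 2) * ((Cmap φ Y)ᵀ * Cmap φ Y).trace) _ X :=
      hfA.add hpen
    intro W
    rw [hfun, hh.fderiv]
    show fderiv ℝ f X ((3/2:ℝ) • W - (1/2:ℝ) • (X * (φ X)ᵀ * W + (X * (φ W)ᵀ + W * (φ X)ᵀ) * X))
      + (β/2) * ((Cmap φ X)ᵀ * (Xᵀ * φ W + Wᵀ * φ X) + (Xᵀ * φ W + Wᵀ * φ X)ᵀ * Cmap φ X).trace = _
    rw [hC0, hG]
    simp only [transpose_zero, Matrix.zero_mul, Matrix.mul_zero, add_zero, Matrix.trace_zero,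
      mul_zero]
    rw [add_comm (X * (φ X)ᵀ * W)]
  constructor
  · -- stationarity ⇒ orthogonality to tangent space
    intro ha Z hZ htan
    have e1 : (φ Z)ᵀ * X + (φ X)ᵀ * Z = 0 := by
      have h := congrArg Matrix.transpose htan
      simpa [Matrix.transpose_add, Matrix.transpose_mul] using h
    have e2 : (X * (φ Z)ᵀ + Z * (φ X)ᵀ) * X + X * (φ X)ᵀ * Z = Z := by
      rw [Matrix.add_mul, Matrix.mul_assoc X (φ Z)ᵀ X, Matrix.mul_assoc Z (φ X)ᵀ X, hXT1,
        Matrix.mul_one, Matrix.mul_assoc X (φ X)ᵀ Z, add_right_comm, ← Matrix.mul_add, e1,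
        Matrix.mul_zero, zero_add]
    have hLAZ : (3/2:ℝ) • Z
        - (1/2:ℝ) • ((X * (φ Z)ᵀ + Z * (φ X)ᵀ) * X + X * (φ X)ᵀ * Z) = Z := by
      rw [e2, ← sub_smul]; norm_num
    have h0 := ha Z hZ
    rw [key Z, hLAZ] at h0
    exact h0
  · -- orthogonality to tangent space ⇒ stationarity
    intro hb W hW
    rw [key W]
    have hφXF := hφ𝓕 X hX
    have hφWF := hφ𝓕 W hW
    have m1 : (φ W)ᵀ * X ∈ Gspan 𝓕 := Submodule.subset_span ⟨φ W, hφWF, X, hX, rfl⟩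
    have m2 : (φ X)ᵀ * X ∈ Gspan 𝓕 := Submodule.subset_span ⟨φ X, hφXF, X, hX, rfl⟩
    have m3 : (φ X)ᵀ * W ∈ Gspan 𝓕 := Submodule.subset_span ⟨φ X, hφXF, W, hW, rfl⟩
    have hZeq : (3/2:ℝ) • W - (1/2:ℝ) • ((X * (φ W)ᵀ + W * (φ X)ᵀ) * X + X * (φ X)ᵀ * W)
        = (3/2:ℝ) • W - (1/2:ℝ) • (X * ((φ W)ᵀ * X) + W * ((φ X)ᵀ * X) + X * ((φ X)ᵀ * W)) := by
      rw [Matrix.add_mul, Matrix.mul_assoc X (φ W)ᵀ X, Matrix.mul_assoc W (φ X)ᵀ X,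
        Matrix.mul_assoc X (φ X)ᵀ W]
    set Z := (3/2:ℝ) • W - (1/2:ℝ) • ((X * (φ W)ᵀ + W * (φ X)ᵀ) * X + X * (φ X)ᵀ * W) with hZdef
    have hZF : Z ∈ 𝓕 := by
      rw [hZeq]
      exact Submodule.sub_mem _ (Submodule.smul_mem _ _ hW)
        (Submodule.smul_mem _ _ (add_mem (add_mem (hXT X hX _ m1) (hXT W hW _ m2))
          (hXT X hX _ m3)))
    have hψ1 : ψ ((φ X)ᵀ * X) = 1 := by rw [hψφ X hX, hX1]
    have hpol : (2:ℝ) • ψ ((φ W)ᵀ * X + (φ X)ᵀ * W) = (2:ℝ) • (Xᵀ * φ W + Wᵀ * φ X) := by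
      have hplus := hψφ (X + W) (add_mem hX hW)
      have hminus := hψφ (X - W) (sub_mem hX hW)
      have hL : (φ (X + W))ᵀ * (X + W) - (φ (X - W))ᵀ * (X - W)
          = (2:ℝ) • ((φ W)ᵀ * X + (φ X)ᵀ * W) := by
        simp only [map_add, map_sub, Matrix.transpose_add, Matrix.transpose_sub,
          Matrix.add_mul, Matrix.sub_mul, Matrix.mul_add, Matrix.mul_sub, two_smul]
        abel
      have hR : (X + W)ᵀ * φ (X + W) - (X - W)ᵀ * φ (X - W)
          = (2:ℝ) • (Xᵀ * φ W + Wᵀ * φ X) := by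
        simp only [map_add, map_sub, Matrix.transpose_add, Matrix.transpose_sub,
          Matrix.add_mul, Matrix.sub_mul, Matrix.mul_add, Matrix.mul_sub, two_smul]
        abel
      rw [← _root_.map_smul, ← hL, _root_.map_sub, hplus, hminus]
      exact hR
    have key2 : ψ ((φ W)ᵀ * X + (φ X)ᵀ * W) = Xᵀ * φ W + Wᵀ * φ X :=
      smul_right_injective _ (two_ne_zero : (2:ℝ) ≠ 0) hpol
    have hφZ : φ Z = φ W - (1/2:ℝ) • (φ X * (Xᵀ * φ W + Wᵀ * φ X)) := by
      rw [hZeq, _root_.map_sub, _root_.map_smul, _root_.map_smul, _root_.map_add, _root_.map_add,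
        hφψ X hX _ m1, hφψ W hW _ m2, hφψ X hX _ m3, hψ1, Matrix.mul_one,
        add_right_comm, ← Matrix.mul_add, ← _root_.map_add, key2]
      module
    have t0 : Xᵀ * φ Z = Xᵀ * φ W - (1/2:ℝ) • (Xᵀ * φ W + Wᵀ * φ X) := by
      rw [hφZ, Matrix.mul_sub, Matrix.mul_smul, ← Matrix.mul_assoc, hX1, Matrix.one_mul]
    have t1 : (X * ((φ W)ᵀ * X))ᵀ * φ X = Xᵀ * φ W := by
      rw [Matrix.transpose_mul, Matrix.transpose_mul, Matrix.transpose_transpose,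
        Matrix.mul_assoc (Xᵀ * φ W), hX1, Matrix.mul_one]
    have t2 : (W * ((φ X)ᵀ * X))ᵀ * φ X = Wᵀ * φ X := by
      rw [Matrix.transpose_mul, Matrix.transpose_mul, Matrix.transpose_transpose, hX1,
        Matrix.one_mul]
    have t3 : (X * ((φ X)ᵀ * W))ᵀ * φ X = Wᵀ * φ X := by
      rw [Matrix.transpose_mul, Matrix.transpose_mul, Matrix.transpose_transpose,
        Matrix.mul_assoc (Wᵀ * φ X), hX1, Matrix.mul_one]
    have t4 : Zᵀ * φ X = (3/2:ℝ) • (Wᵀ * φ X)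
        - (1/2:ℝ) • (Xᵀ * φ W + Wᵀ * φ X + Wᵀ * φ X) := by
      rw [hZeq, Matrix.transpose_sub, Matrix.transpose_smul, Matrix.transpose_smul,
        Matrix.transpose_add, Matrix.transpose_add, Matrix.sub_mul, Matrix.smul_mul,
        Matrix.smul_mul, Matrix.add_mul, Matrix.add_mul, t1, t2, t3]
    have htanZ : Xᵀ * φ Z + Zᵀ * φ X = 0 := by
      rw [t0, t4]; module
    exact hb Z hZF htanZ
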